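/- Let G = (V, w) be a connected n-vertex weighted graph (λ(G) > 0). Then con-cert(G) equals the infimum over real τ with 0 < τ ≤ λ(G) of τ-cut-rank(G). -/

import Mathlib

open Finset Matrix

set_option linter.unusedSectionVars false
set_option maxHeartbeats 1000000



section Cone

variable {H : Type*} [NormedAddCommGroup H] [InnerProductSpace ℝ H] [FiniteDimensional ℝ H]

/-- The conical hull of a finite family of vectors. -/
def coneSet {ι : Type*} [Fintype ι] (v : ι → H) : Set H :=
  {x | ∃ c : ι → ℝ, (∀ i, 0 ≤ c i) ∧ ∑ i, c i • v i = x}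

lemma coneSet_comp_subset {ι κ : Type*} [Fintype ι] [Fintype κ] [DecidableEq κ]
    (v : κ → H) (f : ι → κ) (hf : Function.Injective f) :
    coneSet (v ∘ f) ⊆ coneSet v := by
  rintro x ⟨c, hc, hsum⟩
  classical
  set D : κ → ℝ := fun j => if h : ∃ a, f a = j then c h.choose else 0 with hD
  have hDf : ∀ a, D (f a) = c a := by
    intro a
    have h : ∃ a', f a' = f a := ⟨a, rfl⟩
    have ha : h.choose = a := hf h.choose_spec
    simp [hD, dif_pos h, ha]
  refine ⟨D, ?_, ?_⟩
  · intro j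
    by_cases h : ∃ a, f a = j
    · simp only [hD, dif_pos h]; exact hc _
    · simp [hD, dif_neg h]
  · calc ∑ j, D j • v j = ∑ j ∈ Finset.univ.image f, D j • v j := by
          refine (Finset.sum_subset (Finset.subset_univ _) fun j _ hj => ?_).symm
          have h : ¬ ∃ a, f a = j := by
            intro ⟨a, ha⟩; exact hj (Finset.mem_image.mpr ⟨a, Finset.mem_univ a, ha⟩)
          simp [hD, dif_neg h]
    _ = ∑ a, D (f a) • v (f a) := Finset.sum_image (fun a _ b _ h => hf h)
    _ = ∑ a, c a • (v ∘ f) a := by simp [hDf]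
    _ = x := hsum

lemma isClosed_coneSet_fin : ∀ (m : ℕ) (v : Fin m → H), IsClosed (coneSet v) := by
  intro m
  induction m with
  | zero =>
    intro v
    have : coneSet v = {0} := by
      ext x
      constructor
      · rintro ⟨c, _, hsum⟩; simp at hsum; simp [hsum.symm]
      · rintro rfl; exact ⟨fun i => 0, fun i => le_refl _, by simp⟩
    rw [this]; exact isClosed_singleton
  | succ m ih =>
    intro v
    by_cases hli : LinearIndependent ℝ v
    · -- independent case
      let L : (Fin (m + 1) → ℝ) →ₗ[ℝ] H := Fintype.linearCombination ℝ v
      have hL : ∀ c, L c = ∑ i, c i • v i := fun c => by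
        simp [L, Fintype.linearCombination_apply]
      have hker : LinearMap.ker L = ⊥ := by
        rw [LinearMap.ker_eq_bot']
        intro c hc
        rw [hL] at hc
        exact funext (Fintype.linearIndependent_iff.mp hli c hc)
      have hemb := LinearMap.isClosedEmbedding_of_injective hker
      have heq : coneSet v = L '' {c | ∀ i, 0 ≤ c i} := by
        ext x
        constructor
        · rintro ⟨c, hc, rfl⟩; exact ⟨c, hc, (hL c)⟩
        · rintro ⟨c, hc, rfl⟩; exact ⟨c, hc, (hL c).symm⟩
      rw [heq]
      refine hemb.isClosedMap _ ?_
      have : {c : Fin (m+1) → ℝ | ∀ i, 0 ≤ c i}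
          = ⋂ i, (fun c : Fin (m+1) → ℝ => c i) ⁻¹' Set.Ici 0 := by
        ext c; simp
      rw [this]
      exact isClosed_iInter fun i => isClosed_Ici.preimage (continuous_apply i)
    · -- dependent case
      obtain ⟨g, hgsum, i₁, hgi⟩ := Fintype.not_linearIndependent_iff.mp hli
      obtain ⟨c, hcsum, i₂, hci⟩ :
          ∃ c : Fin (m+1) → ℝ, ∑ i, c i • v i = 0 ∧ ∃ i, 0 < c i := by
        rcases lt_or_ge 0 (g i₁) with h | h
        · exact ⟨g, hgsum, i₁, h⟩
        · refine ⟨-g, by simp [hgsum], i₁, ?_⟩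
          simpa using lt_of_le_of_ne h hgi
      have key : coneSet v = ⋃ i ∈ {i | 0 < c i}, coneSet (v ∘ i.succAbove) := by
        ext x
        constructor
        · rintro ⟨lam, hlam, hsum⟩
          classical
          set P : Finset (Fin (m+1)) := Finset.univ.filter (fun i => 0 < c i) with hP
          have hPne : P.Nonempty := ⟨i₂, by simp [hP, hci]⟩
          obtain ⟨i₀, hi₀P, hmin⟩ := P.exists_min_image (fun i => lam i / c i) hPne
          have hci₀ : 0 < c i₀ := by simpa [hP] using hi₀P
          set t : ℝ := lam i₀ / c i₀ with ht
          have htnn : 0 ≤ t := div_nonneg (hlam i₀) hci₀.le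
          set lam' : Fin (m+1) → ℝ := fun j => lam j - t * c j with hlam'
          have hlam'nn : ∀ j, 0 ≤ lam' j := by
            intro j
            by_cases hcj : 0 < c j
            · have h1 := hmin j (by simp [hP, hcj])
              have h2 : t * c j ≤ lam j := by
                rw [ht]
                calc lam i₀ / c i₀ * c j ≤ lam j / c j * c j :=
                  mul_le_mul_of_nonneg_right h1 hcj.le
                _ = lam j := div_mul_cancel₀ _ hcj.ne'
              simpa [hlam'] using sub_nonneg.mpr h2
            · push_neg at hcj
              have h1 : t * c j ≤ 0 := mul_nonpos_of_nonneg_of_nonpos htnn hcj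
              have h2 := sub_nonneg.mpr (h1.trans (hlam j))
              simpa [hlam'] using h2
          have hlam'i₀ : lam' i₀ = 0 := by
            simp [hlam', ht, div_mul_cancel₀ _ hci₀.ne']
          have htc : ∑ i, (t * c i) • v i = t • ∑ i, c i • v i := by
            rw [Finset.smul_sum]
            exact Finset.sum_congr rfl fun i _ => (smul_smul t (c i) (v i)).symm
          have hsum' : ∑ i, lam' i • v i = x := by
            simp only [hlam', sub_smul, Finset.sum_sub_distrib, htc, hcsum, smul_zero,
              sub_zero, hsum]
          refine Set.mem_biUnion (show i₀ ∈ {i | 0 < c i} from hci₀) ?_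
          refine ⟨fun j => lam' (i₀.succAbove j), fun j => hlam'nn _, ?_⟩
          have hFin := Fin.sum_univ_succAbove (fun i => lam' i • v i) i₀
          rw [hFin, hlam'i₀, zero_smul, zero_add] at hsum'
          exact hsum'
        · intro hx
          obtain ⟨i, _, hmem⟩ := Set.mem_iUnion₂.mp hx
          exact coneSet_comp_subset v i.succAbove (Fin.succAbove_right_injective) hmem
      rw [key]
      exact Set.Finite.isClosed_biUnion (Set.toFinite _) fun i _ => ih _

lemma isClosed_coneSet {ι : Type*} [Fintype ι] (v : ι → H) : IsClosed (coneSet v) := by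
  classical
  let e := (Fintype.equivFin ι).symm
  have : coneSet v = coneSet (v ∘ e) := by
    ext x
    constructor
    · rintro ⟨c, hc, hsum⟩
      exact ⟨c ∘ e, fun i => hc _, by rw [← hsum]; exact (Equiv.sum_comp e fun i => c i • v i)⟩
    · rintro ⟨c, hc, hsum⟩
      refine ⟨c ∘ e.symm, fun i => hc _, ?_⟩
      rw [← hsum]
      refine (Equiv.sum_comp e fun i => c (e.symm i) • v i).symm.trans ?_
      exact Finset.sum_congr rfl fun i _ => by simp
  rw [this]
  exact isClosed_coneSet_fin _ _

end Cone

section Cone2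
variable {H : Type*} [NormedAddCommGroup H] [InnerProductSpace ℝ H] [FiniteDimensional ℝ H]
/-- `coneSet` as a convex cone. -/
def coneCone {ι : Type*} [Fintype ι] (v : ι → H) : ConvexCone ℝ H where
  carrier := coneSet v
  smul_mem' := by
    rintro t ht x ⟨c, hc, hsum⟩
    refine ⟨fun i => t * c i, fun i => mul_nonneg ht.le (hc i), ?_⟩
    rw [← hsum, Finset.smul_sum]
    exact Finset.sum_congr rfl fun i _ => (smul_smul t (c i) (v i)).symm
  add_mem' := by
    rintro x ⟨c, hc, hcsum⟩ y ⟨d, hd, hdsum⟩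
    refine ⟨c + d, fun i => add_nonneg (hc i) (hd i), ?_⟩
    simp only [Pi.add_apply, add_smul, Finset.sum_add_distrib, hcsum, hdsum]

lemma mem_coneSet_single {ι : Type*} [Fintype ι] [DecidableEq ι] (v : ι → H) (i : ι) :
    v i ∈ coneSet v := by
  refine ⟨fun j => if j = i then 1 else 0, fun j => by positivity, ?_⟩
  rw [Finset.sum_eq_single i] <;> simp (config := {contextual := true})

end Cone2

/-- Farkas-type alternative for finitely generated cones in a coordinate space. -/
lemma cone_mem_or_separation {J ι : Type} [Fintype J] [Fintype ι] [DecidableEq ι]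
    (u : ι → J → ℝ) (b : J → ℝ) :
    (∃ c : ι → ℝ, (∀ i, 0 ≤ c i) ∧ ∑ i, c i • u i = b) ∨
    (∃ y : J → ℝ, (∀ i, 0 ≤ ∑ j, u i j * y j) ∧ ∑ j, y j * b j < 0) := by
  classical
  set φ : (J → ℝ) ≃ₗ[ℝ] EuclideanSpace ℝ J := (WithLp.linearEquiv 2 ℝ (J → ℝ)).symm with hφ
  have hφap : ∀ (f : J → ℝ) (j : J), φ f j = f j := fun f j => rfl
  set v : ι → EuclideanSpace ℝ J := fun i => φ (u i) with hv
  by_cases hb : φ b ∈ coneSet v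
  · left
    obtain ⟨c, hc, hsum⟩ := hb
    refine ⟨c, hc, ?_⟩
    have : φ (∑ i, c i • u i) = φ b := by
      rw [map_sum]
      simpa only [_root_.map_smul] using hsum
    exact φ.injective this
  · right
    obtain ⟨y', hy'1, hy'2⟩ :=
      ProperCone.hyperplane_separation'
        (C := { toSubmodule := (coneCone v).toPointedCone ⟨fun i => 0, fun i => le_refl _, by simp⟩,
                isClosed' := isClosed_coneSet v }) hb
    refine ⟨fun j => y' j, fun i => ?_, ?_⟩
    · have := hy'1 (v i) (mem_coneSet_single v i)
      rw [PiLp.inner_apply] at this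
      simpa [hφap, hv, mul_comm] using this
    · rw [PiLp.inner_apply] at hy'2
      simpa [hφap] using hy'2

/-- Matrix Farkas alternative used for LP duality. -/
lemma matrix_farkas {k : ℕ} {E : Type} [Fintype E] [DecidableEq E]
    (A : Matrix (Fin k) E ℝ) (w : E → ℝ) (hw : ∀ e, 0 ≤ w e) (m : E → ℝ) :
    (∃ w' : E → ℝ, (∀ e, 0 ≤ w' e) ∧ A.mulVec w' = A.mulVec w ∧ ∑ e, m e * w' e ≤ 0) ∨
    (∃ y : Fin k → ℝ, (∀ e, Matrix.vecMul y A e ≤ m e) ∧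
      0 < ∑ i, y i * A.mulVec w i) := by
  classical
  set u : (E ⊕ Unit) → ((Fin k ⊕ Unit) → ℝ) :=
    Sum.elim (fun e => Sum.elim (fun i => A i e) (fun _ => m e)) (fun _ => Sum.elim 0 1) with hu
  set b : (Fin k ⊕ Unit) → ℝ := Sum.elim (A.mulVec w) 0 with hb
  rcases cone_mem_or_separation u b with ⟨c, hc, hsum⟩ | ⟨y', hy'1, hy'2⟩
  · left
    set w' : E → ℝ := fun e => c (Sum.inl e) with hw'
    have hcoord : ∀ j, ∑ x, c x * u x j = b j := by
      intro j
      rw [← hsum]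
      simp [Finset.sum_apply]
    refine ⟨w', fun e => hc _, ?_, ?_⟩
    · funext i
      have := hcoord (Sum.inl i)
      rw [Fintype.sum_sum_type] at this
      simp only [hu, Sum.elim_inl, Sum.elim_inr] at this
      simp only [hb, Sum.elim_inl] at this
      rw [Matrix.mulVec, dotProduct]
      rw [← this]
      simp [hw', mul_comm]
    · have h := hcoord (Sum.inr ())
      rw [Fintype.sum_sum_type] at h
      simp only [hu, hb, Sum.elim_inl, Sum.elim_inr, Pi.zero_apply, Pi.one_apply,
        Finset.univ_unique, Finset.sum_singleton, mul_one] at h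
      have h0 : 0 ≤ c (Sum.inr ()) := hc _
      have h1 : ∑ e, m e * w' e = ∑ e, c (Sum.inl e) * m e :=
        Finset.sum_congr rfl fun e _ => mul_comm _ _
      linarith
  · right
    set t : ℝ := y' (Sum.inr ()) with htdef
    have hyinr : 0 ≤ t := by
      have h := hy'1 (Sum.inr ())
      rw [Fintype.sum_sum_type] at h
      simpa only [hu, Sum.elim_inl, Sum.elim_inr, Pi.zero_apply, Pi.one_apply, zero_mul,
        one_mul, Finset.sum_const_zero, zero_add, Finset.univ_unique,
        Finset.sum_singleton] using h
    have hyinl : ∀ e, 0 ≤ (∑ i, A i e * y' (Sum.inl i)) + m e * t := by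
      intro e
      have h := hy'1 (Sum.inl e)
      rw [Fintype.sum_sum_type] at h
      simpa only [hu, Sum.elim_inl, Sum.elim_inr, Finset.univ_unique,
        Finset.sum_singleton] using h
    have hby : (∑ i, y' (Sum.inl i) * A.mulVec w i) < 0 := by
      rw [Fintype.sum_sum_type] at hy'2
      simpa only [hb, Sum.elim_inl, Sum.elim_inr, Pi.zero_apply, mul_zero,
        Finset.univ_unique, Finset.sum_singleton, add_zero] using hy'2
    rcases eq_or_lt_of_le hyinr with hteq | htpos
    · exfalso
      have hnn : 0 ≤ ∑ i, y' (Sum.inl i) * A.mulVec w i := by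
        have hcomm : ∑ i, y' (Sum.inl i) * A.mulVec w i
            = ∑ e, (∑ i, A i e * y' (Sum.inl i)) * w e := by
          simp only [Matrix.mulVec, dotProduct, Finset.mul_sum, Finset.sum_mul]
          rw [Finset.sum_comm]
          exact Finset.sum_congr rfl fun e _ => Finset.sum_congr rfl fun i _ => by ring
        rw [hcomm]
        refine Finset.sum_nonneg fun e _ => mul_nonneg ?_ (hw e)
        have h := hyinl e
        rw [← hteq, mul_zero, add_zero] at h
        exact h
      linarith
    · refine ⟨fun i => -(y' (Sum.inl i)) / t, fun e => ?_, ?_⟩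
      · have hs : -(m e * t) ≤ ∑ i, A i e * y' (Sum.inl i) := by linarith [hyinl e]
        have hneg : ∑ i, -(A i e * y' (Sum.inl i)) = -(∑ i, A i e * y' (Sum.inl i)) := by
          simp
        calc Matrix.vecMul (fun i => -(y' (Sum.inl i)) / t) A e
            = (∑ i, -(A i e * y' (Sum.inl i))) / t := by
              rw [Matrix.vecMul, dotProduct, Finset.sum_div]
              exact Finset.sum_congr rfl fun i _ => by ring
          _ ≤ m e := by
              rw [div_le_iff₀ htpos, hneg]
              linarith
      · have h2 : ∑ i, -(y' (Sum.inl i) * A.mulVec w i)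
            = -(∑ i, y' (Sum.inl i) * A.mulVec w i) := by simp
        have h1 : ∑ i, (-(y' (Sum.inl i)) / t) * A.mulVec w i
            = (∑ i, -(y' (Sum.inl i) * A.mulVec w i)) / t := by
          rw [Finset.sum_div]
          exact Finset.sum_congr rfl fun i _ => by ring
        rw [h1, h2]
        exact div_pos (by linarith) htpos



/-- The set of edge slots: 2-element subsets of the vertex set `Fin n`. -/
abbrev EdgeSlot (n : ℕ) := {e : Finset (Fin n) // e.card = 2}

/-- Weight of the cut with shore `S`: sum of weights of edge slots with exactly
one endpoint in `S`. -/
noncomputable def cutWeight (n : ℕ) (w : EdgeSlot n → ℝ) (S : Finset (Fin n)) : ℝ :=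
  ∑ e : EdgeSlot n, if (e.1 ∩ S).card = 1 then w e else 0

/-- `λ(G)`: the minimum cut weight over all shores `∅ ≠ S ⊊ V`. -/
noncomputable def minCutVal (n : ℕ) (w : EdgeSlot n → ℝ) : ℝ :=
  sInf {x : ℝ | ∃ S : Finset (Fin n), S.Nonempty ∧ S ≠ Finset.univ ∧ cutWeight n w S = x}

/-- The at-least-τ linear-query certificate complexity: the least `k` such that some
`k`-row query matrix `A` certifies that every nonnegative `w'` consistent with the
answers on `w` has minimum cut value at least `τ`. -/
noncomputable def atLeastCert (n : ℕ) (τ : ℝ) (w : EdgeSlot n → ℝ) : ℕ :=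
  sInf {k : ℕ | ∃ A : Matrix (Fin k) (EdgeSlot n) ℝ,
    ∀ w' : EdgeSlot n → ℝ, (∀ e, 0 ≤ w' e) → A.mulVec w = A.mulVec w' →
      τ ≤ minCutVal n w'}

/-- The minimum-cut linear-query certificate complexity. -/
noncomputable def mincutCert (n : ℕ) (w : EdgeSlot n → ℝ) : ℕ :=
  sInf {k : ℕ | ∃ A : Matrix (Fin k) (EdgeSlot n) ℝ,
    ∀ w' : EdgeSlot n → ℝ, (∀ e, 0 ≤ w' e) → A.mulVec w = A.mulVec w' →
      minCutVal n w' = minCutVal n w}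

/-- The connectivity linear-query certificate complexity. -/
noncomputable def conCert (n : ℕ) (w : EdgeSlot n → ℝ) : ℕ :=
  sInf {k : ℕ | ∃ A : Matrix (Fin k) (EdgeSlot n) ℝ,
    ∀ w' : EdgeSlot n → ℝ, (∀ e, 0 ≤ w' e) → A.mulVec w = A.mulVec w' →
      (0 < minCutVal n w' ↔ 0 < minCutVal n w)}

/-- Row indices of the universal cut-edge incidence matrix: nonempty sets of
vertices not containing vertex `1` (represented as `0 : Fin n`). -/
abbrev Shore (n : ℕ) [NeZero n] := {S : Finset (Fin n) // S.Nonempty ∧ (0 : Fin n) ∉ S}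

/-- The universal cut-edge incidence matrix `M_n`. -/
noncomputable def Mn (n : ℕ) [NeZero n] : Matrix (Shore n) (EdgeSlot n) ℝ :=
  fun S e => if (e.1 ∩ S.1).card = 1 then 1 else 0

/-- `τ`-cut-rank of a graph: the minimum rank of a matrix `X ≤ M_n` (entrywise)
with every entry of `Xw` at least `τ`. -/
noncomputable def cutRank (n : ℕ) [NeZero n] (τ : ℝ) (w : EdgeSlot n → ℝ) : ℕ :=
  sInf {r : ℕ | ∃ X : Matrix (Shore n) (EdgeSlot n) ℝ,
    (∀ S e, X S e ≤ Mn n S e) ∧ (∀ S, τ ≤ X.mulVec w S) ∧ X.rank = r}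

/-- The weight vector of the `n`-cycle with unit weights. -/
noncomputable def cycleWeight (n : ℕ) [NeZero n] : EdgeSlot n → ℝ :=
  fun e => if ∃ i : Fin n, e.1 = {i, i + 1} then 1 else 0

section GraphLemmas
variable (n : ℕ) [NeZero n] (w : EdgeSlot n → ℝ)

/-- The set of achievable cut values. -/
def cutSet : Set ℝ :=
  {x : ℝ | ∃ S : Finset (Fin n), S.Nonempty ∧ S ≠ Finset.univ ∧ cutWeight n w S = x}

lemma minCutVal_eq : minCutVal n w = sInf (cutSet n w) := rfl

lemma cutSet_finite : (cutSet n w).Finite := by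
  have : cutSet n w ⊆ (fun S => cutWeight n w S) '' Set.univ := by
    rintro x ⟨S, _, _, rfl⟩; exact ⟨S, trivial, rfl⟩
  exact Set.Finite.subset (Set.Finite.image _ (Set.finite_univ)) this

lemma cutWeight_nonneg (hw : ∀ e, 0 ≤ w e) (S : Finset (Fin n)) : 0 ≤ cutWeight n w S :=
  Finset.sum_nonneg fun e _ => by split <;> [exact hw e; rfl]

lemma cutSet_bddBelow (hw : ∀ e, 0 ≤ w e) : BddBelow (cutSet n w) := by
  refine ⟨0, ?_⟩
  rintro x ⟨S, _, _, rfl⟩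
  exact cutWeight_nonneg n w hw S

lemma minCutVal_le (hw : ∀ e, 0 ≤ w e) {S : Finset (Fin n)} (h1 : S.Nonempty)
    (h2 : S ≠ Finset.univ) : minCutVal n w ≤ cutWeight n w S :=
  csInf_le (cutSet_bddBelow n w hw) ⟨S, h1, h2, rfl⟩

lemma le_minCutVal {τ : ℝ} (hne : (cutSet n w).Nonempty)
    (h : ∀ S : Finset (Fin n), S.Nonempty → S ≠ Finset.univ → τ ≤ cutWeight n w S) :
    τ ≤ minCutVal n w :=
  le_csInf hne (by rintro x ⟨S, h1, h2, rfl⟩; exact h S h1 h2)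

lemma cutWeight_compl (S : Finset (Fin n)) : cutWeight n w Sᶜ = cutWeight n w S := by
  refine Finset.sum_congr rfl fun e _ => ?_
  have hsd : e.1 \ S = e.1 ∩ Sᶜ := by rw [sdiff_eq, Finset.inf_eq_inter]
  have hcard : (e.1 ∩ S).card + (e.1 ∩ Sᶜ).card = 2 := by
    rw [← hsd, Finset.card_inter_add_card_sdiff, e.2]
  have : (e.1 ∩ Sᶜ).card = 1 ↔ (e.1 ∩ S).card = 1 := by omega
  simp only [this]

lemma shore_of (S : Finset (Fin n)) (h1 : S.Nonempty) (h2 : S ≠ Finset.univ) :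
    ∃ T : Shore n, cutWeight n w T.1 = cutWeight n w S := by
  by_cases h0 : (0 : Fin n) ∈ S
  · obtain ⟨a, ha⟩ : ∃ a, a ∉ S := by
      by_contra h; push_neg at h
      exact h2 (Finset.eq_univ_of_forall h)
    exact ⟨⟨Sᶜ, ⟨a, Finset.mem_compl.mpr ha⟩, by simp [h0]⟩, cutWeight_compl n w S⟩
  · exact ⟨⟨S, h1, h0⟩, rfl⟩

lemma shore_props (S : Shore n) : S.1.Nonempty ∧ S.1 ≠ Finset.univ :=
  ⟨S.2.1, fun h => S.2.2 (h ▸ Finset.mem_univ _)⟩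

lemma mulVec_Mn (S : Shore n) : (Mn n).mulVec w S = cutWeight n w S.1 := by
  rw [Matrix.mulVec, dotProduct, cutWeight]
  exact Finset.sum_congr rfl fun e _ => by rw [Mn]; split <;> simp

lemma cutSet_nonempty_of_pos (h : 0 < minCutVal n w) : (cutSet n w).Nonempty := by
  by_contra hne
  rw [Set.not_nonempty_iff_eq_empty] at hne
  rw [minCutVal_eq, hne, Real.sInf_empty] at h
  exact lt_irrefl _ h

end GraphLemmas

/-- For a connected graph `G` (`λ(G) > 0`), `con-cert(G)` equals the infimum over
`0 < τ ≤ λ(G)` of `τ-cut-rank(G)`. -/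
theorem conCert_eq_inf_cutRank (n : ℕ) [NeZero n] (w : EdgeSlot n → ℝ)
    (hw : ∀ e, 0 ≤ w e) (hconn : 0 < minCutVal n w) :
    conCert n w =
      sInf {r : ℕ | ∃ τ : ℝ, 0 < τ ∧ τ ≤ minCutVal n w ∧ cutRank n τ w = r} := by
  classical
  have hcs : (cutSet n w).Nonempty := cutSet_nonempty_of_pos n w hconn
  -- a shore exists
  have hcs' := hcs
  obtain ⟨x₀, T₀, hT₀1, hT₀2, hx₀⟩ := hcs'
  obtain ⟨S₀, _⟩ := shore_of n w T₀ hT₀1 hT₀2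
  have hShore : Nonempty (Shore n) := ⟨S₀⟩
  apply le_antisymm
  · -- conCert ≤ sInf RHS
    have hRHSne : {r : ℕ | ∃ τ : ℝ, 0 < τ ∧ τ ≤ minCutVal n w ∧ cutRank n τ w = r}.Nonempty :=
      ⟨cutRank n (minCutVal n w) w, minCutVal n w, hconn, le_refl _, rfl⟩
    obtain ⟨τ, hτ0, hτlam, hcr⟩ := Nat.sInf_mem hRHSne
    rw [← hcr]
    -- extract an optimal X for cutRank
    have hXset : {r : ℕ | ∃ X : Matrix (Shore n) (EdgeSlot n) ℝ,
        (∀ S e, X S e ≤ Mn n S e) ∧ (∀ S, τ ≤ X.mulVec w S) ∧ X.rank = r}.Nonempty := by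
      refine ⟨(Mn n).rank, Mn n, fun S e => le_refl _, fun S => ?_, rfl⟩
      rw [mulVec_Mn]
      exact hτlam.trans (minCutVal_le n w hw (shore_props n S).1 (shore_props n S).2)
    have hXmem : cutRank n τ w ∈ {r : ℕ | ∃ X : Matrix (Shore n) (EdgeSlot n) ℝ,
        (∀ S e, X S e ≤ Mn n S e) ∧ (∀ S, τ ≤ X.mulVec w S) ∧ X.rank = r} :=
      Nat.sInf_mem hXset
    obtain ⟨X, hXle, hXw, hXrank⟩ := hXmem
    -- build a certificate from a basis of the row space of X
    set V : Submodule ℝ (EdgeSlot n → ℝ) := Submodule.span ℝ (Set.range fun S => X S) with hV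
    have hfr : Module.finrank ℝ V = cutRank n τ w := by
      rw [← hXrank, X.rank_eq_finrank_span_row, hV]; rfl
    let B := Module.finBasisOfFinrankEq ℝ V hfr
    set A : Matrix (Fin (cutRank n τ w)) (EdgeSlot n) ℝ := fun i => (B i : EdgeSlot n → ℝ)
      with hA
    apply Nat.sInf_le
    refine ⟨A, fun w' hw' hAeq => ?_⟩
    -- the linear functional x ↦ ∑ e, x e * (w e - w' e) vanishes on V
    set φ : (EdgeSlot n → ℝ) →ₗ[ℝ] ℝ :=
      { toFun := fun x => ∑ e, x e * (w e - w' e)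
        map_add' := fun x y => by
          simp only [Pi.add_apply, add_mul, Finset.sum_add_distrib]
        map_smul' := fun c x => by
          simp only [Pi.smul_apply, smul_eq_mul, RingHom.id_apply, Finset.mul_sum, mul_assoc] }
      with hφ
    have hφB : ∀ i, φ (A i) = 0 := by
      intro i
      have h1 : φ (A i) = A.mulVec w i - A.mulVec w' i := by
        simp only [hφ, LinearMap.coe_mk, AddHom.coe_mk, Matrix.mulVec, dotProduct,
          mul_sub, Finset.sum_sub_distrib]
      rw [h1, hAeq, sub_self]
    have hφV : ∀ x ∈ V, φ x = 0 := by
      have : φ.comp V.subtype = 0 := by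
        apply B.ext
        intro i
        simp only [LinearMap.comp_apply, Submodule.subtype_apply, LinearMap.zero_apply]
        exact hφB i
      intro x hx
      have := congrArg (fun f => f ⟨x, hx⟩) this
      simpa using this
    have hXw' : ∀ S : Shore n, X.mulVec w' S = X.mulVec w S := by
      intro S
      have hmem : (X S) ∈ V := Submodule.subset_span (Set.mem_range_self S)
      have h0 := hφV (X S) hmem
      simp only [hφ, LinearMap.coe_mk, AddHom.coe_mk, mul_sub, Finset.sum_sub_distrib,
        sub_eq_zero] at h0
      simp only [Matrix.mulVec, dotProduct]
      exact h0.symm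
    -- every cut of w' is at least τ
    have hpos' : 0 < minCutVal n w' := by
      refine lt_of_lt_of_le hτ0 (le_minCutVal n w' ?_ ?_)
      · exact ⟨cutWeight n w' T₀, T₀, hT₀1, hT₀2, rfl⟩
      · intro S h1 h2
        obtain ⟨T, hT⟩ := shore_of n w' S h1 h2
        rw [← hT, ← mulVec_Mn n w' T]
        calc τ ≤ X.mulVec w T := hXw T
          _ = X.mulVec w' T := (hXw' T).symm
          _ ≤ (Mn n).mulVec w' T := by
              simp only [Matrix.mulVec, dotProduct]
              refine Finset.sum_le_sum fun e _ => ?_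
              exact mul_le_mul_of_nonneg_right (hXle T e) (hw' e)
    exact iff_of_true hpos' hconn
  · -- sInf RHS ≤ conCert
    have hcert : {k : ℕ | ∃ A : Matrix (Fin k) (EdgeSlot n) ℝ,
        ∀ w' : EdgeSlot n → ℝ, (∀ e, 0 ≤ w' e) → A.mulVec w = A.mulVec w' →
          (0 < minCutVal n w' ↔ 0 < minCutVal n w)}.Nonempty := by
      refine ⟨Fintype.card (EdgeSlot n),
        Matrix.of fun i e => if Fintype.equivFin (EdgeSlot n) e = i then 1 else 0,
        fun w' hw' hAeq => ?_⟩
      have hweq : w' = w := by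
        funext e
        have h1 := congrFun hAeq (Fintype.equivFin (EdgeSlot n) e)
        have key : ∀ u : EdgeSlot n → ℝ,
            Matrix.mulVec (Matrix.of fun i e =>
              if Fintype.equivFin (EdgeSlot n) e = i then (1:ℝ) else 0) u
              (Fintype.equivFin (EdgeSlot n) e) = u e := by
          intro u
          rw [Matrix.mulVec, dotProduct]
          rw [Finset.sum_eq_single e]
          · simp
          · intro b _ hb
            have : Fintype.equivFin (EdgeSlot n) b ≠ Fintype.equivFin (EdgeSlot n) e :=
              fun h => hb (Equiv.injective _ h)
            simp [Matrix.of_apply, this]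
          · simp
        rw [key w, key w'] at h1
        exact h1.symm
      rw [hweq]
    have hAmem : conCert n w ∈ {k : ℕ | ∃ A : Matrix (Fin k) (EdgeSlot n) ℝ,
        ∀ w' : EdgeSlot n → ℝ, (∀ e, 0 ≤ w' e) → A.mulVec w = A.mulVec w' →
          (0 < minCutVal n w' ↔ 0 < minCutVal n w)} := Nat.sInf_mem hcert
    obtain ⟨A, hA⟩ := hAmem
    -- apply Farkas for each shore
    have hfar : ∀ S : Shore n, ∃ y : Fin (conCert n w) → ℝ,
        (∀ e, Matrix.vecMul y A e ≤ Mn n S e) ∧ 0 < ∑ i, y i * A.mulVec w i := by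
      intro S
      rcases matrix_farkas A w hw (fun e => Mn n S e) with ⟨w', hw'0, hAw', hm⟩ | hy
      · exfalso
        have hiff := hA w' hw'0 hAw'.symm
        have hpos' : 0 < minCutVal n w' := hiff.mpr hconn
        have hcw : cutWeight n w' S.1 = ∑ e, Mn n S e * w' e := by
          rw [cutWeight]
          refine Finset.sum_congr rfl fun e _ => ?_
          rw [Mn]
          split <;> simp
        have := minCutVal_le n w' hw'0 (shore_props n S).1 (shore_props n S).2
        rw [hcw] at this
        linarith
      · exact hy
    choose y hy1 hy2 using hfar
    set X : Matrix (Shore n) (EdgeSlot n) ℝ := Matrix.of fun S e => Matrix.vecMul (y S) A e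
      with hX
    have hXrank : X.rank ≤ conCert n w := by
      have hXeq : X = (Matrix.of fun S i => y S i) * A := by
        ext S e
        rw [Matrix.mul_apply, hX, Matrix.of_apply, Matrix.vecMul, dotProduct]
        rfl
      rw [hXeq]
      exact (Matrix.rank_mul_le_right _ A).trans
        (A.rank_le_card_height.trans (Fintype.card_fin _).le)
    have hXw : ∀ S : Shore n, X.mulVec w S = ∑ i, y S i * A.mulVec w i := by
      intro S
      have : X.mulVec w S = Matrix.vecMul (y S) A ⬝ᵥ w := rfl
      rw [this, ← Matrix.dotProduct_mulVec]
      rfl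
    set τ : ℝ := Finset.univ.inf' (Finset.univ_nonempty) (fun S : Shore n => X.mulVec w S)
      with hτdef
    have hτpos : 0 < τ := by
      rw [hτdef, Finset.lt_inf'_iff]
      intro S _
      rw [hXw S]; exact hy2 S
    have hτle : ∀ S : Shore n, τ ≤ X.mulVec w S := fun S =>
      Finset.inf'_le _ (Finset.mem_univ S)
    have hXleMn : ∀ (S : Shore n) (e : EdgeSlot n), X S e ≤ Mn n S e := fun S e => hy1 S e
    have hτlam : τ ≤ minCutVal n w := by
      have hmem : minCutVal n w ∈ cutSet n w := by
        rw [minCutVal_eq]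
        exact Set.Nonempty.csInf_mem hcs (cutSet_finite n w)
      obtain ⟨T, hT1, hT2, hT3⟩ := hmem
      obtain ⟨S, hS⟩ := shore_of n w T hT1 hT2
      calc τ ≤ X.mulVec w S := hτle S
        _ ≤ (Mn n).mulVec w S := by
            simp only [Matrix.mulVec, dotProduct]
            refine Finset.sum_le_sum fun e _ => ?_
            exact mul_le_mul_of_nonneg_right (hXleMn S e) (hw e)
        _ = cutWeight n w T := by rw [mulVec_Mn n w S, hS]
        _ = minCutVal n w := hT3
    have hm1 : X.rank ∈ {r : ℕ | ∃ X : Matrix (Shore n) (EdgeSlot n) ℝ,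
        (∀ S e, X S e ≤ Mn n S e) ∧ (∀ S, τ ≤ X.mulVec w S) ∧ X.rank = r} :=
      ⟨X, hXleMn, hτle, rfl⟩
    have h1 : cutRank n τ w ≤ conCert n w := (Nat.sInf_le hm1).trans hXrank
    have hm2 : cutRank n τ w ∈ {r : ℕ | ∃ τ : ℝ, 0 < τ ∧ τ ≤ minCutVal n w ∧ cutRank n τ w = r} :=
      ⟨τ, hτpos, hτlam, rfl⟩
    exact (Nat.sInf_le hm2).trans h1
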